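/- For every ξ with 0 < ξ < 1, setting p = 1/2 and q = 1/(1+ξ), the constraint (1−p)(1−q) ≥ p·q·ξ is satisfied (so 𝒫(p,q,ξ) ∈ USD₂ by Lemma 1) and moreover W(𝒫(p,q,ξ)) = −p·ξ − q + q(1−ξ) + ξ < 0. -/

import Mathlib

open Matrix
open scoped ComplexOrder

/-- A qubit state: a positive semidefinite 2×2 complex matrix with trace 1. -/
def QubitState (ρ : Matrix (Fin 2) (Fin 2) ℂ) : Prop :=
  ρ.PosSemidef ∧ ρ.trace = 1

/-- A qubit effect: a 2×2 complex matrix `E` with both `E` and `1 - E` positive semidefinite. -/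
def QubitEffect (E : Matrix (Fin 2) (Fin 2) ℂ) : Prop :=
  E.PosSemidef ∧ (1 - E).PosSemidef

/-- A realization of a 3×3 correlation matrix `P` by three qubit states, a three-outcome
qubit POVM `(M11, M21, M31)` and a two-outcome qubit POVM `(M12, M22)`. -/
def IsRealization (P : Matrix (Fin 3) (Fin 3) ℝ)
    (ρ : Fin 3 → Matrix (Fin 2) (Fin 2) ℂ)
    (M11 M21 M31 M12 M22 : Matrix (Fin 2) (Fin 2) ℂ) : Prop :=
  (∀ x, QubitState (ρ x)) ∧
  QubitEffect M11 ∧ QubitEffect M21 ∧ QubitEffect M31 ∧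
  M11 + M21 + M31 = 1 ∧
  QubitEffect M12 ∧ QubitEffect M22 ∧
  M12 + M22 = 1 ∧
  (∀ x, P x 0 = ((ρ x * M11).trace).re ∧
        P x 1 = ((ρ x * M21).trace).re ∧
        P x 2 = ((ρ x * M12).trace).re)

/-- The USD pattern of zeros and ones of the correlation matrix, Eq. (3). -/
def USDpattern (P : Matrix (Fin 3) (Fin 3) ℝ) : Prop :=
  P 0 2 = 0 ∧ P 1 1 = 0 ∧ P 1 2 = 1 ∧ P 2 0 = 0

/-- The set USD₂ of qubit USD correlations. -/
def USD2 (P : Matrix (Fin 3) (Fin 3) ℝ) : Prop :=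
  USDpattern P ∧
  ∃ ρ M11 M21 M31 M12 M22, IsRealization P ρ M11 M21 M31 M12 M22

/-- A three-outcome qubit POVM is simulable by dichotomic measurements, Eq. (1). -/
def Simulable (M11 M21 M31 : Matrix (Fin 2) (Fin 2) ℂ) : Prop :=
  ∃ p1 p2 p3 : ℝ, ∃ N11 N22 N13 : Matrix (Fin 2) (Fin 2) ℂ,
    0 ≤ p1 ∧ 0 ≤ p2 ∧ 0 ≤ p3 ∧ p1 + p2 + p3 = 1 ∧
    QubitEffect N11 ∧ QubitEffect N22 ∧ QubitEffect N13 ∧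
    M11 = p1 • N11 + p3 • N13 ∧
    M21 = p1 • (1 - N11) + p2 • N22 ∧
    M31 = p2 • (1 - N22) + p3 • (1 - N13)

/-- The set SIM₂ of simulable trichotomic qubit correlations in the minimal scenario. -/
def SIM2 (P : Matrix (Fin 3) (Fin 3) ℝ) : Prop :=
  ∃ ρ M11 M21 M31 M12 M22, IsRealization P ρ M11 M21 M31 M12 M22 ∧
    Simulable M11 M21 M31

/-- The parameterized USD correlation matrix 𝒫(p, q, ξ) of Eq. (4). -/
noncomputable def Pmat (p q ξ : ℝ) : Matrix (Fin 3) (Fin 3) ℝ :=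
  !![p * ξ,       q,           0;
     p * (1 - ξ), 0,           1;
     0,           q * (1 - ξ), ξ]

/-- For `0 < ξ < 1`, `p = 1/2`, `q = 1/(1+ξ)`: the constraint `(1-p)(1-q) ≥ p q ξ` holds
(so `𝒫(p,q,ξ) ∈ USD₂` by Lemma 1), and `W(𝒫(p,q,ξ)) = -pξ - q + q(1-ξ) + ξ < 0`. -/

private lemma quad_nonneg' (a b c u0 v0 u1 v1 : ℝ) (ha : 0 ≤ a) (hc : 0 ≤ c) (hd : b^2 ≤ a*c) :
    0 ≤ a*(u0^2+v0^2) + 2*b*(u0*u1+v0*v1) + c*(u1^2+v1^2) := by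
  rcases ha.eq_or_lt with h | h
  · have hb : b = 0 := by nlinarith
    subst hb
    rw [← h]
    nlinarith [sq_nonneg u1, sq_nonneg v1]
  · nlinarith [sq_nonneg (a*u0+b*u1), sq_nonneg (a*v0+b*v1),
      mul_nonneg (sub_nonneg.2 hd) (add_nonneg (sq_nonneg u1) (sq_nonneg v1))]

private lemma psd2 (a b c : ℝ) (ha : 0 ≤ a) (hc : 0 ≤ c) (hd : b^2 ≤ a*c) :
    (!![(a:ℂ), (b:ℂ); (b:ℂ), (c:ℂ)]).PosSemidef := by
  rw [Matrix.posSemidef_iff_dotProduct_mulVec]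
  constructor
  · ext i j
    fin_cases i <;> fin_cases j <;> simp [Matrix.conjTranspose_apply]
  · intro x
    have hx : star x ⬝ᵥ (!![(a:ℂ), (b:ℂ); (b:ℂ), (c:ℂ)]).mulVec x =
        ((a*((x 0).re^2+(x 0).im^2) + 2*b*((x 0).re*(x 1).re+(x 0).im*(x 1).im)
          + c*((x 1).re^2+(x 1).im^2) : ℝ) : ℂ) := by
      simp [dotProduct, Matrix.mulVec, Fin.sum_univ_two, Complex.ext_iff,
        Complex.add_re, Complex.add_im, Complex.mul_re, Complex.mul_im]
      simp only [← Complex.ofReal_pow, Complex.ofReal_re, Complex.ofReal_im]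
      constructor <;> ring
    rw [hx, Complex.zero_le_real]
    exact quad_nonneg' _ _ _ _ _ _ _ ha hc hd

private lemma one_sub2 (a b c : ℝ) :
    (1 : Matrix (Fin 2) (Fin 2) ℂ) - !![(a:ℂ), (b:ℂ); (b:ℂ), (c:ℂ)]
      = !![((1-a:ℝ):ℂ), ((-b:ℝ):ℂ); ((-b:ℝ):ℂ), ((1-c:ℝ):ℂ)] := by
  ext i j
  fin_cases i <;> fin_cases j <;> simp [Matrix.one_apply]

private lemma effect2 (a b c : ℝ) (ha : 0 ≤ a) (hc : 0 ≤ c) (hd : b^2 ≤ a*c)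
    (ha' : a ≤ 1) (hc' : c ≤ 1) (hd' : b^2 ≤ (1-a)*(1-c)) :
    QubitEffect !![(a:ℂ), (b:ℂ); (b:ℂ), (c:ℂ)] := by
  refine ⟨psd2 a b c ha hc hd, ?_⟩
  rw [one_sub2]
  exact psd2 (1-a) (-b) (1-c) (by linarith) (by linarith) (by nlinarith)

private lemma state2 (a b c : ℝ) (ha : 0 ≤ a) (hc : 0 ≤ c) (hd : b^2 ≤ a*c) (htr : a + c = 1) :
    QubitState !![(a:ℂ), (b:ℂ); (b:ℂ), (c:ℂ)] := by
  refine ⟨psd2 a b c ha hc hd, ?_⟩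
  rw [Matrix.trace_fin_two]
  simp
  exact_mod_cast htr

private lemma tr_re (a b c d e f : ℝ) :
    ((!![(a:ℂ), (b:ℂ); (b:ℂ), (c:ℂ)] * !![(d:ℂ), (e:ℂ); (e:ℂ), (f:ℂ)]).trace).re
      = a*d + 2*(b*e) + c*f := by
  simp [Matrix.trace_fin_two, Matrix.mul_apply, Fin.sum_univ_two]
  ring


theorem witness_negative_on_Pmat (ξ : ℝ) (h0 : 0 < ξ) (h1 : ξ < 1) :
    (1 - (1/2 : ℝ)) * (1 - 1/(1+ξ)) ≥ (1/2) * (1/(1+ξ)) * ξ ∧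
    USD2 (Pmat (1/2) (1/(1+ξ)) ξ) ∧
    (-(Pmat (1/2) (1/(1+ξ)) ξ 0 0) - Pmat (1/2) (1/(1+ξ)) ξ 0 1
        + Pmat (1/2) (1/(1+ξ)) ξ 2 1 + Pmat (1/2) (1/(1+ξ)) ξ 2 2
      = -(1/2) * ξ - 1/(1+ξ) + (1/(1+ξ)) * (1 - ξ) + ξ) ∧
    -(1/2) * ξ - 1/(1+ξ) + (1/(1+ξ)) * (1 - ξ) + ξ < 0 := by
  have hξ1 : (0:ℝ) < 1 + ξ := by linarith
  have hne : (1:ℝ) + ξ ≠ 0 := ne_of_gt hξ1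
  set q : ℝ := 1/(1+ξ) with hq
  have hq0 : 0 < q := by positivity
  have hq1 : q < 1 := by rw [hq, div_lt_one hξ1]; linarith
  have hqe : q * (1+ξ) = 1 := by rw [hq]; field_simp
  set s : ℝ := Real.sqrt (ξ*(1-ξ)) with hsdef
  have hs : s^2 = ξ*(1-ξ) := Real.sq_sqrt (by nlinarith)
  have hs0 : 0 ≤ s := Real.sqrt_nonneg _
  refine ⟨?_, ⟨?_, ?_⟩, ?_, ?_⟩
  · have h : 1 - q = ξ/(1+ξ) := by rw [hq]; field_simp; ring
    rw [ge_iff_le, h]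
    have h2 : (1/2:ℝ) * q * ξ = (1-1/2)*(ξ/(1+ξ)) := by rw [hq]; ring
    rw [h2]
  · refine ⟨by norm_num [Pmat, Matrix.cons_val_two], by norm_num [Pmat], by norm_num [Pmat, Matrix.cons_val_two], by norm_num [Pmat, Matrix.cons_val_two]⟩
  · refine ⟨![!![((1:ℝ):ℂ), ((0:ℝ):ℂ); ((0:ℝ):ℂ), ((0:ℝ):ℂ)],
      !![((0:ℝ):ℂ), ((0:ℝ):ℂ); ((0:ℝ):ℂ), ((1:ℝ):ℂ)],
      !![((1-ξ:ℝ):ℂ), ((s:ℝ):ℂ); ((s:ℝ):ℂ), ((ξ:ℝ):ℂ)]],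
      !![((ξ/2:ℝ):ℂ), ((-s/2:ℝ):ℂ); ((-s/2:ℝ):ℂ), (((1-ξ)/2:ℝ):ℂ)],
      !![((q:ℝ):ℂ), ((0:ℝ):ℂ); ((0:ℝ):ℂ), ((0:ℝ):ℂ)],
      !![((1-ξ/2-q:ℝ):ℂ), ((s/2:ℝ):ℂ); ((s/2:ℝ):ℂ), (((1+ξ)/2:ℝ):ℂ)],
      !![((0:ℝ):ℂ), ((0:ℝ):ℂ); ((0:ℝ):ℂ), ((1:ℝ):ℂ)],
      !![((1:ℝ):ℂ), ((0:ℝ):ℂ); ((0:ℝ):ℂ), ((0:ℝ):ℂ)],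
      ?_, ?_, ?_, ?_, ?_, ?_, ?_, ?_, ?_⟩
    · intro x
      fin_cases x
      · exact state2 1 0 0 (by norm_num) (by norm_num) (by norm_num) (by norm_num)
      · exact state2 0 0 1 (by norm_num) (by norm_num) (by norm_num) (by norm_num)
      · exact state2 (1-ξ) s ξ (by linarith) (by linarith) (by nlinarith) (by ring)
    · exact effect2 (ξ/2) (-s/2) ((1-ξ)/2) (by linarith) (by linarith) (by nlinarith)
        (by linarith) (by linarith) (by nlinarith)
    · exact effect2 q 0 0 (by linarith) (by norm_num) (by nlinarith)
        (by linarith) (by norm_num) (by nlinarith)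
    · exact effect2 (1-ξ/2-q) (s/2) ((1+ξ)/2) (by nlinarith) (by linarith) (by nlinarith)
        (by nlinarith) (by linarith)
        (by nlinarith [mul_nonneg hq0.le (by linarith : (0:ℝ) ≤ 1-ξ)])
    · ext i j
      fin_cases i <;> fin_cases j <;> simp [Matrix.one_apply] <;> push_cast <;> ring
    · exact effect2 0 0 1 (by norm_num) (by norm_num) (by norm_num)
        (by norm_num) (by norm_num) (by norm_num)
    · exact effect2 1 0 0 (by norm_num) (by norm_num) (by norm_num)
        (by norm_num) (by norm_num) (by norm_num)
    · ext i j
      fin_cases i <;> fin_cases j <;> simp [Matrix.one_apply]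
    · intro x
      fin_cases x <;> refine ⟨?_, ?_, ?_⟩ <;>
        simp [Pmat, Matrix.trace_fin_two, Matrix.mul_apply, Fin.sum_univ_two,
          Complex.add_re, Complex.mul_re] <;>
        first
          | ring1
          | (push_cast; ring1)
          | (linear_combination hs)
          | (linear_combination -hs)
  · norm_num [Pmat, Matrix.cons_val_two]
  · have h : -(1/2) * ξ - q + q * (1 - ξ) + ξ = ξ/2 - q*ξ := by ring
    rw [h, sub_neg, hq, div_mul_eq_mul_div, lt_div_iff₀ hξ1]
    nlinarith
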